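/- arXiv:2211.04200 — 2 statements merged into one kernel-verified Lean document; each statement's English description precedes it below -/
import Mathlib

section
/- Let g(β) = log₂(1 + C(1−β)) − log₂(1 + D₁√(D₂D₃)) + D₁(D₂+D₃)β / (2√(D₂D₃)(1 + D₁√(D₂D₃)) ln 2) for β ∈ [0,1], where C, D₁, D₂, D₃ > 0 and D₁√(D₂D₃) = C (i.e., D₁ = C/√(D₂D₃)). Then g is concave in β, g(0) = 0, and g'(0) ≤ 0 if and only if 1/D₂ + 1/D₃ ≤ 2; consequently g(β) ≤ 0 for all β ∈ [0,1] if and only if 1/D₂ + 1/D₃ ≤ 2. -/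
/-- The function `g(β) = ∂R̂/∂η |_{η=0}` from Proposition 3. -/
noncomputable def gfun (C D1 D2 D3 β : ℝ) : ℝ :=
  Real.logb 2 (1 + C * (1 - β)) - Real.logb 2 (1 + D1 * Real.sqrt (D2 * D3)) +
    D1 * (D2 + D3) * β /
      (2 * Real.sqrt (D2 * D3) * (1 + D1 * Real.sqrt (D2 * D3)) * Real.log 2)

theorem stmt_11 (C D1 D2 D3 : ℝ) (hC : 0 < C) (h1 : 0 < D1) (h2 : 0 < D2)
    (h3 : 0 < D3) (hrel : D1 * Real.sqrt (D2 * D3) = C) :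
    ConcaveOn ℝ (Set.Icc 0 1) (gfun C D1 D2 D3) ∧
    gfun C D1 D2 D3 0 = 0 ∧
    (deriv (gfun C D1 D2 D3) 0 ≤ 0 ↔ 1 / D2 + 1 / D3 ≤ 2) ∧
    ((∀ β ∈ Set.Icc (0 : ℝ) 1, gfun C D1 D2 D3 β ≤ 0) ↔ 1 / D2 + 1 / D3 ≤ 2) := by
  have hln2 : 0 < Real.log 2 := Real.log_pos (by norm_num)
  set s := Real.sqrt (D2 * D3) with hsdef
  have hs : 0 < s := Real.sqrt_pos.mpr (by positivity)
  have hs2 : s ^ 2 = D2 * D3 := Real.sq_sqrt (by positivity)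
  have hC1 : (0:ℝ) < 1 + C := by linarith
  set L := D1 * (D2 + D3) / (2 * s * (1 + C) * Real.log 2) with hLdef
  have hgfun : ∀ β, gfun C D1 D2 D3 β =
      Real.log (1 + C * (1 - β)) / Real.log 2 - Real.log (1 + C) / Real.log 2 + L * β := by
    intro β
    simp only [gfun, Real.logb, ← hsdef, hrel, hLdef]
    ring
  set k := -C / ((1 + C) * Real.log 2) + L with hkdef
  -- derivative
  have hderiv : HasDerivAt (gfun C D1 D2 D3) k 0 := by
    have hinner : HasDerivAt (fun β : ℝ => 1 + C * (1 - β)) (-C) 0 := by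
      have := (((hasDerivAt_id (0:ℝ)).const_sub 1).const_mul C).const_add 1
      simpa using this
    have hlog : HasDerivAt (fun β : ℝ => Real.log (1 + C * (1 - β))) (-C / (1 + C)) 0 := by
      have := hinner.log (by simpa using ne_of_gt hC1)
      simpa using this
    have hfull : HasDerivAt (fun β : ℝ =>
        Real.log (1 + C * (1 - β)) / Real.log 2 - Real.log (1 + C) / Real.log 2 + L * β)
        (-C / (1 + C) / Real.log 2 + L) 0 := by
      have hlin : HasDerivAt (fun β : ℝ => L * β) L 0 := by
        simpa using (hasDerivAt_id (0:ℝ)).const_mul L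
      exact ((hlog.div_const _).sub_const _).add hlin
    have heq : (fun β : ℝ =>
        Real.log (1 + C * (1 - β)) / Real.log 2 - Real.log (1 + C) / Real.log 2 + L * β)
        = gfun C D1 D2 D3 := funext fun β => (hgfun β).symm
    have hkk : -C / (1 + C) / Real.log 2 = -C / ((1 + C) * Real.log 2) := by
      rw [div_div]
    rw [heq, hkk] at hfull
    exact hfull
  have hD1s : D1 = C / s := by
    field_simp
    linarith [hrel]
  have hkval : k = C * (D2 + D3 - 2 * (D2 * D3)) / (2 * (D2 * D3) * (1 + C) * Real.log 2) := by
    rw [hkdef, hLdef, ← hs2, hD1s]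
    field_simp
    ring
  have hden : 0 < 2 * (D2 * D3) * (1 + C) * Real.log 2 :=
    mul_pos (mul_pos (by positivity) hC1) hln2
  have hkle : k ≤ 0 ↔ D2 + D3 ≤ 2 * (D2 * D3) := by
    rw [hkval, div_nonpos_iff]
    constructor
    · rintro (⟨hA, hB⟩ | ⟨hA, hB⟩)
      · linarith
      · nlinarith
    · intro h
      right
      exact ⟨by nlinarith, le_of_lt hden⟩
  have hcond : (1 / D2 + 1 / D3 ≤ 2) ↔ D2 + D3 ≤ 2 * (D2 * D3) := by
    rw [div_add_div _ _ (ne_of_gt h2) (ne_of_gt h3), div_le_iff₀ (by positivity)]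
    constructor <;> intro h <;> nlinarith
  -- upper bound g(β) ≤ k β on [0,1]
  have hbound : ∀ β ∈ Set.Icc (0:ℝ) 1, gfun C D1 D2 D3 β ≤ k * β := by
    rintro β ⟨hb0, hb1⟩
    rw [hgfun]
    have hx : 0 < 1 + C * (1 - β) := by nlinarith
    have hlogle : Real.log (1 + C * (1 - β)) - Real.log (1 + C) ≤ -(C * β) / (1 + C) := by
      have h := Real.log_le_sub_one_of_pos (show 0 < (1 + C * (1 - β)) / (1 + C) by positivity)
      rw [Real.log_div (ne_of_gt hx) (ne_of_gt hC1)] at h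
      have he : (1 + C * (1 - β)) / (1 + C) - 1 = -(C * β) / (1 + C) := by
        field_simp
        ring
      linarith [he ▸ h]
    have hdiv : (Real.log (1 + C * (1 - β)) - Real.log (1 + C)) / Real.log 2
        ≤ (-(C * β) / (1 + C)) / Real.log 2 := by gcongr
    have hid : -(C * β) / (1 + C) / Real.log 2 + L * β = k * β := by
      rw [hkdef]
      field_simp
    have hsplit : Real.log (1 + C * (1 - β)) / Real.log 2 - Real.log (1 + C) / Real.log 2
        = (Real.log (1 + C * (1 - β)) - Real.log (1 + C)) / Real.log 2 := by
      rw [sub_div]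
    linarith [hsplit ▸ hdiv]
  -- concavity
  have hconc : ConcaveOn ℝ (Set.Icc 0 1) (gfun C D1 D2 D3) := by
    refine ⟨convex_Icc 0 1, ?_⟩
    rintro x ⟨hx0, hx1⟩ y ⟨hy0, hy1⟩ a b ha hb hab
    simp only [smul_eq_mul, hgfun]
    have hX : 0 < 1 + C * (1 - x) := by nlinarith
    have hY : 0 < 1 + C * (1 - y) := by nlinarith
    have hmix : a * (1 + C * (1 - x)) + b * (1 + C * (1 - y)) = 1 + C * (1 - (a * x + b * y)) := by
      linear_combination (1 + C) * hab
    have hlc := strictConcaveOn_log_Ioi.concaveOn.2 (Set.mem_Ioi.mpr hX) (Set.mem_Ioi.mpr hY)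
      ha hb hab
    simp only [smul_eq_mul] at hlc
    rw [hmix] at hlc
    have h5 : (a * Real.log (1 + C * (1 - x)) + b * Real.log (1 + C * (1 - y))) / Real.log 2
        ≤ Real.log (1 + C * (1 - (a * x + b * y))) / Real.log 2 := by gcongr
    have hc : a * (Real.log (1 + C) / Real.log 2) + b * (Real.log (1 + C) / Real.log 2)
        = Real.log (1 + C) / Real.log 2 := by
      rw [← add_mul, hab, one_mul]
    have h5' : a * (Real.log (1 + C * (1 - x)) / Real.log 2)
        + b * (Real.log (1 + C * (1 - y)) / Real.log 2)
        ≤ Real.log (1 + C * (1 - (a * x + b * y))) / Real.log 2 := by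
      rw [← mul_div_assoc, ← mul_div_assoc, ← add_div]
      exact h5
    have hL : a * (L * x) + b * (L * y) = L * (a * x + b * y) := by ring
    linarith [h5', hc, hL]
  have hg0 : gfun C D1 D2 D3 0 = 0 := by
    rw [hgfun]
    simp
  -- forward: g ≤ 0 on [0,1] implies k ≤ 0
  have hfwd : (∀ β ∈ Set.Icc (0:ℝ) 1, gfun C D1 D2 D3 β ≤ 0) → k ≤ 0 := by
    intro h
    by_contra hk
    push_neg at hk
    have htend : Filter.Tendsto (slope (gfun C D1 D2 D3) 0) (nhdsWithin 0 (Set.Ioi 0)) (nhds k) :=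
      (hasDerivAt_iff_tendsto_slope.mp hderiv).mono_left
        (nhdsWithin_mono 0 (fun x hx => ne_of_gt hx))
    have h1' : ∀ᶠ x in nhdsWithin (0:ℝ) (Set.Ioi 0), 0 < slope (gfun C D1 D2 D3) 0 x :=
      htend.eventually (eventually_gt_nhds hk)
    have h2' : ∀ᶠ x in nhdsWithin (0:ℝ) (Set.Ioi 0), x ∈ Set.Ioo (0:ℝ) 1 :=
      Ioo_mem_nhdsGT_of_mem ⟨le_refl 0, one_pos⟩
    obtain ⟨x, hxs, hx01⟩ := (h1'.and h2').exists
    have hxg : 0 < gfun C D1 D2 D3 x := by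
      have : slope (gfun C D1 D2 D3) 0 x = gfun C D1 D2 D3 x / x := by
        rw [slope_def_field, hg0]
        simp
      rw [this] at hxs
      exact (div_pos_iff.mp hxs).resolve_right (fun ⟨_, hx⟩ => absurd hx01.1 (not_lt.mpr hx.le)) |>.1
    exact absurd (h x ⟨hx01.1.le, hx01.2.le⟩) (not_le.mpr hxg)
  refine ⟨hconc, hg0, ?_, ?_⟩
  · rw [hderiv.deriv]
    exact hkle.trans hcond.symm
  · constructor
    · intro h
      exact hcond.mpr (hkle.mp (hfwd h))
    · intro h β hβ
      have hk0 : k ≤ 0 := hkle.mpr (hcond.mp h)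
      have := hbound β hβ
      nlinarith [hβ.1]
end

section
/- For fixed β ∈ [0,1], the function η ↦ (1−η)·log₂(1 + D₁√((ηβ+D₂)(ηβ+D₃))) with D₁, D₂, D₃ > 0 is concave on [0,1]. -/
open Real Set

private lemma log_concave_aux {p q a b : ℝ} (hp : 0 < p) (hq : 0 < q)
    (ha : 0 ≤ a) (hb : 0 ≤ b) (hab : a + b = 1) :
    a * Real.log p + b * Real.log q ≤ Real.log (a * p + b * q) := by
  have := strictConcaveOn_log_Ioi.concaveOn.2 (Set.mem_Ioi.2 hp) (Set.mem_Ioi.2 hq) ha hb hab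
  simpa [smul_eq_mul] using this

/-- If g is concave and monotone on [0,1], then (1-η)*g η is concave on [0,1]. -/
private lemma one_sub_mul_concave {g : ℝ → ℝ}
    (hg : ConcaveOn ℝ (Set.Icc (0:ℝ) 1) g)
    (hm : MonotoneOn g (Set.Icc (0:ℝ) 1)) :
    ConcaveOn ℝ (Set.Icc (0:ℝ) 1) (fun η => (1 - η) * g η) := by
  refine ⟨convex_Icc 0 1, ?_⟩
  rintro x hx y hy a b ha hb hab
  simp only [smul_eq_mul]
  set w : ℝ := a * (1 - x) + b * (1 - y) with hw
  have hx0 := hx.1; have hx1 := hx.2; have hy0 := hy.1; have hy1 := hy.2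
  have hwnn : 0 ≤ w := by
    have := mul_nonneg ha (by linarith : (0:ℝ) ≤ 1 - x)
    have := mul_nonneg hb (by linarith : (0:ℝ) ≤ 1 - y)
    linarith
  have hz : a * x + b * y ∈ Set.Icc (0:ℝ) 1 :=
    (convex_Icc (0:ℝ) 1) hx hy ha hb hab
  have hzsub : 1 - (a * x + b * y) = w := by rw [hw]; nlinarith
  rcases eq_or_lt_of_le hwnn with hw0 | hwpos
  · have h1 : a * (1 - x) = 0 := by
      have := mul_nonneg ha (by linarith : (0:ℝ) ≤ 1 - x)
      have := mul_nonneg hb (by linarith : (0:ℝ) ≤ 1 - y)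
      linarith
    have h2 : b * (1 - y) = 0 := by
      have := mul_nonneg ha (by linarith : (0:ℝ) ≤ 1 - x)
      linarith
    have h0 : a * ((1 - x) * g x) + b * ((1 - y) * g y) = 0 := by
      have e1 : a * ((1 - x) * g x) = (a * (1 - x)) * g x := by ring
      have e2 : b * ((1 - y) * g y) = (b * (1 - y)) * g y := by ring
      rw [e1, e2, h1, h2]; ring
    rw [h0, hzsub, ← hw0]; simp
  · set a' : ℝ := a * (1 - x) / w with ha'
    set b' : ℝ := b * (1 - y) / w with hb'
    have ha'0 : 0 ≤ a' := div_nonneg (mul_nonneg ha (by linarith)) hwnn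
    have hb'0 : 0 ≤ b' := div_nonneg (mul_nonneg hb (by linarith)) hwnn
    have hab' : a' + b' = 1 := by
      rw [ha', hb', ← add_div, hw, div_self (ne_of_gt hwpos)]
    have hz' : a' * x + b' * y ∈ Set.Icc (0:ℝ) 1 :=
      (convex_Icc (0:ℝ) 1) hx hy ha'0 hb'0 hab'
    have hcon := hg.2 hx hy ha'0 hb'0 hab'
    simp only [smul_eq_mul] at hcon
    have hle : a' * x + b' * y ≤ a * x + b * y := by
      have key : a * (1 - x) * x + b * (1 - y) * y ≤ w * (a * x + b * y) := by
        have he : (a * (1 - x) + b * (1 - y)) * (a * x + b * y)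
            - (a * (1 - x) * x + b * (1 - y) * y) = a * b * (y - x) ^ 2 := by
          linear_combination (a * x + b * y - a * x ^ 2 - b * y ^ 2) * hab
        rw [hw]
        nlinarith [mul_nonneg (mul_nonneg ha hb) (sq_nonneg (y - x))]
      rw [ha', hb', div_mul_eq_mul_div, div_mul_eq_mul_div, ← add_div,
        div_le_iff₀ hwpos]
      nlinarith [key]
    have hmono := hm hz' hz hle
    have step : a' * g x + b' * g y ≤ g (a * x + b * y) := le_trans hcon hmono
    have hmul := mul_le_mul_of_nonneg_left step hwnn
    rw [hzsub]
    calc a * ((1 - x) * g x) + b * ((1 - y) * g y)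
        = w * (a' * g x + b' * g y) := by
          rw [ha', hb']; field_simp
      _ ≤ w * g (a * x + b * y) := hmul

private lemma g_mono {β D1 D2 D3 : ℝ} (hβ0 : 0 ≤ β)
    (h1 : 0 < D1) (h2 : 0 < D2) (h3 : 0 < D3) :
    MonotoneOn (fun η : ℝ => Real.logb 2 (1 + D1 * Real.sqrt ((η * β + D2) * (η * β + D3))))
      (Set.Icc (0:ℝ) 1) := by
  have hP : ∀ η : ℝ, 0 ≤ η → 0 < η * β + D2 := fun η hη => by nlinarith
  have hQ : ∀ η : ℝ, 0 ≤ η → 0 < η * β + D3 := fun η hη => by nlinarith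
  have hpos : ∀ η : ℝ, 0 ≤ η →
      0 < 1 + D1 * Real.sqrt ((η * β + D2) * (η * β + D3)) := fun η hη => by
    have := Real.sqrt_nonneg ((η * β + D2) * (η * β + D3))
    nlinarith
  rintro x ⟨hx0, _⟩ y ⟨hy0, _⟩ hxy
  have harg : (x * β + D2) * (x * β + D3) ≤ (y * β + D2) * (y * β + D3) := by
    have hxb : x * β ≤ y * β := mul_le_mul_of_nonneg_right hxy hβ0
    nlinarith [hP x hx0, hQ x hx0]
  have hs := Real.sqrt_le_sqrt harg
  have hd := mul_le_mul_of_nonneg_left hs (le_of_lt h1)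
  exact (Real.logb_le_logb (by norm_num) (hpos x hx0) (hpos y hy0)).2 (by linarith)

set_option maxHeartbeats 1000000 in
private lemma g_concave {β D1 D2 D3 : ℝ} (hβ0 : 0 ≤ β)
    (h1 : 0 < D1) (h2 : 0 < D2) (h3 : 0 < D3) :
    ConcaveOn ℝ (Set.Icc (0:ℝ) 1)
      (fun η : ℝ => Real.logb 2 (1 + D1 * Real.sqrt ((η * β + D2) * (η * β + D3)))) := by
  have hP : ∀ η : ℝ, 0 ≤ η → 0 < η * β + D2 := fun η hη => by nlinarith
  have hQ : ∀ η : ℝ, 0 ≤ η → 0 < η * β + D3 := fun η hη => by nlinarith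
  have hpos : ∀ η : ℝ, 0 ≤ η →
      0 < 1 + D1 * Real.sqrt ((η * β + D2) * (η * β + D3)) := fun η hη => by
    have := Real.sqrt_nonneg ((η * β + D2) * (η * β + D3))
    nlinarith
  refine ⟨convex_Icc 0 1, ?_⟩
  rintro x ⟨hx0, hx1⟩ y ⟨hy0, hy1⟩ a b ha hb hab
  simp only [smul_eq_mul]
  set z : ℝ := a * x + b * y with hz
  have hz0 : 0 ≤ z := by nlinarith
  set sx := Real.sqrt ((x * β + D2) * (x * β + D3)) with hsx
  set sy := Real.sqrt ((y * β + D2) * (y * β + D3)) with hsy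
  set sz := Real.sqrt ((z * β + D2) * (z * β + D3)) with hsz
  have hsx0 : 0 ≤ sx := Real.sqrt_nonneg _
  have hsy0 : 0 ≤ sy := Real.sqrt_nonneg _
  have hsxsq : sx ^ 2 = (x * β + D2) * (x * β + D3) :=
    Real.sq_sqrt (le_of_lt (mul_pos (hP x hx0) (hQ x hx0)))
  have hsysq : sy ^ 2 = (y * β + D2) * (y * β + D3) :=
    Real.sq_sqrt (le_of_lt (mul_pos (hP y hy0) (hQ y hy0)))
  have hkey : a * sx + b * sy ≤ sz := by
    have hPz : z * β + D2 = a * (x * β + D2) + b * (y * β + D2) := by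
      rw [hz]; nlinarith
    have hQz : z * β + D3 = a * (x * β + D3) + b * (y * β + D3) := by
      rw [hz]; nlinarith
    have hsq : (a * sx + b * sy) ^ 2 ≤ (z * β + D2) * (z * β + D3) := by
      rw [hPz, hQz]
      have hcs : 2 * (sx * sy) ≤ (x * β + D2) * (y * β + D3) + (y * β + D2) * (x * β + D3) := by
        have h2' : (sx * sy) ^ 2
            = ((x * β + D2) * (x * β + D3)) * ((y * β + D2) * (y * β + D3)) := by
          rw [mul_pow, hsxsq, hsysq]
        have huv : (2 * (sx * sy)) ^ 2
            ≤ ((x * β + D2) * (y * β + D3) + (y * β + D2) * (x * β + D3)) ^ 2 := by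
          nlinarith [sq_nonneg ((x * β + D2) * (y * β + D3) - (y * β + D2) * (x * β + D3))]
        calc 2 * (sx * sy) = Real.sqrt ((2 * (sx * sy)) ^ 2) := by
              rw [Real.sqrt_sq (by positivity)]
          _ ≤ Real.sqrt (((x * β + D2) * (y * β + D3) + (y * β + D2) * (x * β + D3)) ^ 2) :=
              Real.sqrt_le_sqrt huv
          _ = (x * β + D2) * (y * β + D3) + (y * β + D2) * (x * β + D3) := by
              rw [Real.sqrt_sq (by positivity)]
      have e1 : (a * (x * β + D2) + b * (y * β + D2)) * (a * (x * β + D3) + b * (y * β + D3))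
          = a ^ 2 * ((x * β + D2) * (x * β + D3)) + b ^ 2 * ((y * β + D2) * (y * β + D3))
            + a * b * ((x * β + D2) * (y * β + D3) + (y * β + D2) * (x * β + D3)) := by ring
      have e2 : (a * sx + b * sy) ^ 2
          = a ^ 2 * sx ^ 2 + b ^ 2 * sy ^ 2 + a * b * (2 * (sx * sy)) := by ring
      rw [e1, e2, hsxsq, hsysq]
      have := mul_le_mul_of_nonneg_left hcs (mul_nonneg ha hb)
      linarith
    calc a * sx + b * sy = Real.sqrt ((a * sx + b * sy) ^ 2) := by
          rw [Real.sqrt_sq (by positivity)]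
      _ ≤ sz := Real.sqrt_le_sqrt hsq
  have hpx := hpos x hx0
  have hpy := hpos y hy0
  have hpz := hpos z hz0
  rw [← hsx] at hpx
  rw [← hsy] at hpy
  rw [← hsz] at hpz
  have hlog : a * Real.log (1 + D1 * sx) + b * Real.log (1 + D1 * sy)
      ≤ Real.log (1 + D1 * sz) := by
    have h1' : a * (1 + D1 * sx) + b * (1 + D1 * sy) = 1 + D1 * (a * sx + b * sy) := by
      nlinarith
    have hc := log_concave_aux hpx hpy ha hb hab
    rw [h1'] at hc
    refine hc.trans (Real.log_le_log (by positivity) ?_)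
    nlinarith
  have hlog2 : 0 < Real.log 2 := Real.log_pos (by norm_num)
  simp only [Real.logb]
  have expand : a * (Real.log (1 + D1 * sx) / Real.log 2)
      + b * (Real.log (1 + D1 * sy) / Real.log 2)
      = (a * Real.log (1 + D1 * sx) + b * Real.log (1 + D1 * sy)) / Real.log 2 := by ring
  rw [expand]
  gcongr

theorem stmt_12 (β D1 D2 D3 : ℝ) (hβ : β ∈ Set.Icc (0 : ℝ) 1)
    (h1 : 0 < D1) (h2 : 0 < D2) (h3 : 0 < D3) :
    ConcaveOn ℝ (Set.Icc 0 1)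
      (fun η : ℝ => (1 - η) * Real.logb 2 (1 + D1 * Real.sqrt ((η * β + D2) * (η * β + D3)))) := by
  exact one_sub_mul_concave (g_concave hβ.1 h1 h2 h3) (g_mono hβ.1 h1 h2 h3)
end
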